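/- Let u : A ⥤ B be a functor between small categories which is a precofibration and such that for every object b of B the fiber A_b of u over b is aspheric. Then u is an aspheric functor. -/

import Mathlib

open CategoryTheory Limits

namespace Paper

/-- A right asphericity structure: a class of small categories satisfying (As1): every
small category having a terminal object belongs to the class, and (As2): if `u : A ⥤ B`
is a functor with `B` in the class and all comma categories `A/b` in the class, then `A`
is in the class. -/
def IsRightAsphericityStructure (𝒜 : Set Cat.{0,0}) : Prop :=
  (∀ C : Cat.{0,0}, HasTerminal C → C ∈ 𝒜) ∧
  (∀ (A B : Cat.{0,0}) (u : A ⥤ B), B ∈ 𝒜 →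
    (∀ b : B, Cat.of (CostructuredArrow u b) ∈ 𝒜) → A ∈ 𝒜)

/-- A functor between small categories is aspheric (w.r.t. a class 𝒜 of small
categories) if all its comma categories `A/b` belong to 𝒜. -/
def Aspheric (𝒜 : Set Cat.{0,0}) {A B : Cat.{0,0}} (u : A ⥤ B) : Prop :=
  ∀ b : B, Cat.of (CostructuredArrow u b) ∈ 𝒜

/-- The fiber of `u : A ⥤ B` over `b`: objects are the `a` with `u a = b`, morphisms
are the `f` with `u f = 1_b` (expressed via `eqToHom`). -/
def Fiber {A B : Cat.{0,0}} (u : A ⥤ B) (b : B) : Type := {a : A // u.obj a = b}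

instance {A B : Cat.{0,0}} (u : A ⥤ B) (b : B) : Category (Fiber u b) where
  Hom a a' := {f : a.1 ⟶ a'.1 // u.map f = eqToHom (a.2.trans a'.2.symm)}
  id a := ⟨𝟙 a.1, by simp⟩
  comp f g := ⟨f.1 ≫ g.1, by simp [f.2, g.2]⟩
  id_comp f := Subtype.ext (Category.id_comp f.1)
  comp_id f := Subtype.ext (Category.comp_id f.1)
  assoc f g h := Subtype.ext (Category.assoc f.1 g.1 h.1)

/-- The canonical functor `A_b ⥤ A/b`, sending `a` to `(a, 1_b)`. -/
def fiberToComma {A B : Cat.{0,0}} (u : A ⥤ B) (b : B) :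
    Fiber u b ⥤ CostructuredArrow u b where
  obj a := CostructuredArrow.mk (eqToHom a.2)
  map {a a'} f := CostructuredArrow.homMk f.1 (by simp [f.2])

/-- An arrow `c : a ⟶ a'` is cocartesian with respect to `u` if every `f : a ⟶ a''`
with `u f = u c` factors uniquely through `c` via a morphism over an identity. -/
def IsCocartesian {A B : Cat.{0,0}} (u : A ⥤ B) {a a' : A} (c : a ⟶ a') : Prop :=
  ∀ (a'' : A) (f : a ⟶ a'') (h : u.obj a'' = u.obj a'),
    u.map f ≫ eqToHom h = u.map c →
    ∃! g : a' ⟶ a'', u.map g = eqToHom h.symm ∧ f = c ≫ g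

/-- `u` is a precofibration if every arrow of `B` admits a cocartesian lift with any
prescribed source. -/
def IsPrecofibration {A B : Cat.{0,0}} (u : A ⥤ B) : Prop :=
  ∀ ⦃b b' : B⦄ (p : b ⟶ b') (a : A) (ha : u.obj a = b),
    ∃ (a' : A) (c : a ⟶ a') (ha' : u.obj a' = b'),
      u.map c = eqToHom ha ≫ p ≫ eqToHom ha'.symm ∧ IsCocartesian u c


section Aux

variable {A B : Cat.{0,0}} (u : A ⥤ B) (h : IsPrecofibration u) (b : B)

noncomputable def liftObj (X : CostructuredArrow u b) : A :=
  (h X.hom X.left rfl).choose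

noncomputable def liftHom (X : CostructuredArrow u b) : X.left ⟶ liftObj u h b X :=
  (h X.hom X.left rfl).choose_spec.choose

theorem lift_eq (X : CostructuredArrow u b) : u.obj (liftObj u h b X) = b :=
  (h X.hom X.left rfl).choose_spec.choose_spec.choose

theorem lift_map (X : CostructuredArrow u b) :
    u.map (liftHom u h b X) = eqToHom rfl ≫ X.hom ≫ eqToHom (lift_eq u h b X).symm :=
  (h X.hom X.left rfl).choose_spec.choose_spec.choose_spec.1

theorem lift_cocart (X : CostructuredArrow u b) : IsCocartesian u (liftHom u h b X) :=
  (h X.hom X.left rfl).choose_spec.choose_spec.choose_spec.2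

noncomputable def Fobj (X : CostructuredArrow u b) : Fiber u b :=
  ⟨liftObj u h b X, lift_eq u h b X⟩

theorem exu (X : CostructuredArrow u b) (Y : Fiber u b) (k : X ⟶ (fiberToComma u b).obj Y) :
    ∃! g : liftObj u h b X ⟶ Y.1,
      u.map g = eqToHom ((lift_eq u h b X).trans Y.2.symm) ∧ k.left = liftHom u h b X ≫ g := by
  have w : u.map k.left ≫ eqToHom Y.2 = X.hom := CostructuredArrow.w k
  have := lift_cocart u h b X Y.1 k.left (Y.2.trans (lift_eq u h b X).symm) ?_
  · obtain ⟨g, ⟨hg1, hg2⟩, hu⟩ := this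
    exact ⟨g, ⟨by rw [hg1], hg2⟩, fun g' hg' => hu g' ⟨by rw [hg'.1], hg'.2⟩⟩
  · rw [lift_map]
    simp only [eqToHom_refl, Category.id_comp]
    rw [← w, Category.assoc]
    congr 1
    exact (eqToHom_trans _ _).symm

noncomputable def e (X : CostructuredArrow u b) (Y : Fiber u b) :
    (Fobj u h b X ⟶ Y) ≃ (X ⟶ (fiberToComma u b).obj Y) where
  toFun g := CostructuredArrow.homMk (liftHom u h b X ≫ g.1)
    (by
      simp [fiberToComma, lift_map, g.2, eqToHom_trans]
      erw [Functor.map_comp, lift_map, g.2]; simp only [eqToHom_refl, Category.id_comp, Category.assoc]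
      erw [Category.assoc, Category.assoc, eqToHom_trans, eqToHom_trans, eqToHom_refl, Category.comp_id])
  invFun k := ⟨(exu u h b X Y k).choose, (exu u h b X Y k).choose_spec.1.1⟩
  left_inv g := Subtype.ext
    (((exu u h b X Y _).choose_spec.2 g.1 ⟨g.2, rfl⟩)).symm
  right_inv k := CostructuredArrow.ext _ k
    ((exu u h b X Y k).choose_spec.1.2).symm

theorem he (X : CostructuredArrow u b) (Y Y' : Fiber u b) (g : Y ⟶ Y')
    (f : Fobj u h b X ⟶ Y) :
    e u h b X Y' (f ≫ g) = e u h b X Y f ≫ (fiberToComma u b).map g := by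
  apply CostructuredArrow.ext
  simp only [e, fiberToComma, Equiv.coe_fn_mk, CostructuredArrow.homMk_left,
    CostructuredArrow.comp_left, Category.assoc]
  exact (Category.assoc _ _ _).symm

end Aux

/-- A precofibration with aspheric fibers is an aspheric functor. -/
theorem aspheric_of_precofibration (𝒜 : Set Cat.{0,0})
    (h𝒜 : IsRightAsphericityStructure 𝒜) {A B : Cat.{0,0}} (u : A ⥤ B)
    (h : IsPrecofibration u) (hfib : ∀ b : B, Cat.of (Fiber u b) ∈ 𝒜) :
    Aspheric 𝒜 u := by
  intro b
  let F := Adjunction.leftAdjointOfEquiv (e u h b) (he u h b)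
  let adj := Adjunction.adjunctionOfEquivLeft (e u h b) (he u h b)
  exact h𝒜.2 (Cat.of (CostructuredArrow u b)) (Cat.of (Fiber u b)) F (hfib b)
    (fun x => h𝒜.1 _ (IsTerminal.hasTerminal (CategoryTheory.mkTerminalOfRightAdjoint _ adj x)))

end Paper
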